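/- A resource theory has a single complete resource monotone if and only if it is totally ordered. That is: there exists a resource monotone R such that for all density matrices ρ, σ one has ρ → σ if and only if R(ρ) ≥ R(σ), exactly when for every pair of density matrices ρ, σ at least one of the conversions ρ → σ or σ → ρ is possible by free operations. -/

import Mathlib

open scoped Matrix Kronecker ComplexOrder

noncomputable section

/-- A density matrix: positive semidefinite with unit trace. -/
def IsDensityMatrix {ι : Type*} [Fintype ι] (ρ : Matrix ι ι ℂ) : Prop :=
  ρ.PosSemidef ∧ ρ.trace = 1

/-- The square root of a positive semidefinite matrix (Mathlib's former `Matrix.PosSemidef.sqrt`). -/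
noncomputable def Matrix.PosSemidef.sqrt {n 𝕜 : Type*} [Fintype n] [DecidableEq n] [RCLike 𝕜]
    {A : Matrix n n 𝕜} (hA : A.PosSemidef) : Matrix n n 𝕜 :=
  hA.1.eigenvectorUnitary.1 * Matrix.diagonal ((↑) ∘ (√·) ∘ hA.1.eigenvalues) *
    (star hA.1.eigenvectorUnitary : Matrix n n 𝕜)

/-- The trace norm `‖M‖₁ = Tr √(M† M)`. -/
noncomputable def traceNorm {ι : Type*} [Fintype ι] [DecidableEq ι]
    (M : Matrix ι ι ℂ) : ℝ :=
  ((Matrix.posSemidef_conjTranspose_mul_self M).sqrt.trace).re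

/-- The amplification `Λ ⊗ id_k` of a linear map on matrices. -/
def amplify {ι : Type*} [Fintype ι] [DecidableEq ι]
    (Λ : Matrix ι ι ℂ →ₗ[ℂ] Matrix ι ι ℂ) (k : ℕ)
    (M : Matrix (ι × Fin k) (ι × Fin k) ℂ) : Matrix (ι × Fin k) (ι × Fin k) ℂ :=
  Matrix.of fun p q => Λ (Matrix.of fun i j => M (i, p.2) (j, q.2)) p.1 q.1

/-- A linear map on matrices is CPTP (a quantum channel) if all its amplifications
preserve positive semidefiniteness and it preserves the trace. -/
def IsCPTP {ι : Type*} [Fintype ι] [DecidableEq ι]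
    (Λ : Matrix ι ι ℂ →ₗ[ℂ] Matrix ι ι ℂ) : Prop :=
  (∀ (k : ℕ) (M : Matrix (ι × Fin k) (ι × Fin k) ℂ),
      M.PosSemidef → (amplify Λ k M).PosSemidef) ∧
  (∀ M, (Λ M).trace = M.trace)

/-- A quantum channel on a `d`-dimensional system. -/
structure QChannel (d : ℕ) where
  toFun : Matrix (Fin d) (Fin d) ℂ →ₗ[ℂ] Matrix (Fin d) (Fin d) ℂ
  cptp : IsCPTP toFun

/-- A resource theory: a convex compact set `F` of free states and a set `O` of free
operations containing the identity, closed under composition, preserving `F`, and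
containing the state-preparation channel `ρ ↦ Tr(ρ)σ` for every free `σ`. -/
structure ResourceTheory (d : ℕ) where
  F : Set (Matrix (Fin d) (Fin d) ℂ)
  O : Set (QChannel d)
  F_density : ∀ σ ∈ F, IsDensityMatrix σ
  F_convex : Convex ℝ F
  F_compact : IsCompact F
  id_mem : ∃ Λ ∈ O, ∀ ρ, Λ.toFun ρ = ρ
  comp_mem : ∀ Λ₁ ∈ O, ∀ Λ₂ ∈ O, ∃ Λ ∈ O, ∀ ρ, Λ.toFun ρ = Λ₂.toFun (Λ₁.toFun ρ)
  free_mapsto : ∀ Λ ∈ O, ∀ σ ∈ F, Λ.toFun σ ∈ F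
  prep_mem : ∀ σ ∈ F, ∃ Λ ∈ O, ∀ ρ : Matrix (Fin d) (Fin d) ℂ, Λ.toFun ρ = ρ.trace • σ

/-- `ρ → σ`: for every `ε > 0` some free operation maps `ρ` within trace-distance `ε` of `σ`. -/
def Converts {d : ℕ} (RT : ResourceTheory d) (ρ σ : Matrix (Fin d) (Fin d) ℂ) : Prop :=
  ∀ ε > 0, ∃ Λ ∈ RT.O, traceNorm (Λ.toFun ρ - σ) < ε

/-- A resource monotone: nonnegative on states, nonincreasing under free operations,
vanishing on free states. -/
def IsMonotone {d : ℕ} (RT : ResourceTheory d) (R : Matrix (Fin d) (Fin d) ℂ → ℝ) : Prop :=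
  (∀ ρ, IsDensityMatrix ρ → 0 ≤ R ρ) ∧
  (∀ ρ, IsDensityMatrix ρ → ∀ Λ ∈ RT.O, R (Λ.toFun ρ) ≤ R ρ) ∧
  (∀ σ ∈ RT.F, R σ = 0)

/-- The pure state `|ψ⟩⟨ψ|`. -/
def pureState {ι : Type*} (ψ : ι → ℂ) : Matrix ι ι ℂ :=
  Matrix.vecMulVec ψ (star ψ)

/-- `ψ` is a unit vector. -/
def IsUnitVec {ι : Type*} [Fintype ι] (ψ : ι → ℂ) : Prop :=
  ∑ i, Complex.normSq (ψ i) = 1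

/-- Trace-norm distance from `ρ` to a set of states. -/
noncomputable def distToSet {ι : Type*} [Fintype ι] [DecidableEq ι]
    (F : Set (Matrix ι ι ℂ)) (ρ : Matrix ι ι ℂ) : ℝ :=
  sInf ((fun μ => traceNorm (ρ - μ)) '' F)


namespace RTAux

variable {ι : Type*} [Fintype ι] [DecidableEq ι] {A B : Matrix ι ι ℂ}

lemma star_mul_self_unitary (hA : A.IsHermitian) :
    star (hA.eigenvectorUnitary : Matrix ι ι ℂ) * (hA.eigenvectorUnitary : Matrix ι ι ℂ) = 1 :=
  Matrix.mem_unitaryGroup_iff'.mp (hA.eigenvectorUnitary).2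

lemma mul_star_self_unitary (hA : A.IsHermitian) :
    (hA.eigenvectorUnitary : Matrix ι ι ℂ) * star (hA.eigenvectorUnitary : Matrix ι ι ℂ) = 1 :=
  Matrix.mem_unitaryGroup_iff.mp (hA.eigenvectorUnitary).2

lemma cfc_mul (hA : A.IsHermitian) (f g : ℝ → ℝ) :
    hA.cfc f * hA.cfc g = hA.cfc (fun x => f x * g x) := by
  have hd : (RCLike.ofReal ∘ (fun x => f x * g x) ∘ hA.eigenvalues : ι → ℂ)
      = fun i => ((f (hA.eigenvalues i) : ℂ) * (g (hA.eigenvalues i) : ℂ)) := by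
    funext i; simp [Function.comp]
  simp only [Matrix.IsHermitian.cfc, Unitary.conjStarAlgAut_apply, Unitary.coe_star, hd]
  set U : Matrix ι ι ℂ := (hA.eigenvectorUnitary : Matrix ι ι ℂ)
  rw [show ∀ X Y : Matrix ι ι ℂ,
        (U * X * star U) * (U * Y * star U) = U * (X * (star U * U) * Y) * star U
      from fun X Y => by noncomm_ring,
    star_mul_self_unitary hA, mul_one, Matrix.diagonal_mul_diagonal]
  simp [Function.comp]

lemma cfc_sub (hA : A.IsHermitian) (f g : ℝ → ℝ) :
    hA.cfc f - hA.cfc g = hA.cfc (fun x => f x - g x) := by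
  have hd : (RCLike.ofReal ∘ (fun x => f x - g x) ∘ hA.eigenvalues : ι → ℂ)
      = fun i => ((f (hA.eigenvalues i) : ℂ) - (g (hA.eigenvalues i) : ℂ)) := by
    funext i; simp [Function.comp]
  simp only [Matrix.IsHermitian.cfc, Unitary.conjStarAlgAut_apply, Unitary.coe_star, hd]
  rw [← Matrix.sub_mul, ← Matrix.mul_sub, Matrix.diagonal_sub]
  simp [Function.comp]

lemma cfc_trace (hA : A.IsHermitian) (f : ℝ → ℝ) :
    (hA.cfc f).trace = ((∑ i, f (hA.eigenvalues i) : ℝ) : ℂ) := by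
  simp only [Matrix.IsHermitian.cfc, Unitary.conjStarAlgAut_apply, Unitary.coe_star]
  rw [Matrix.trace_mul_cycle, star_mul_self_unitary hA, Matrix.one_mul, Matrix.trace_diagonal]
  push_cast
  rfl

lemma cfc_posSemidef (hA : A.IsHermitian) {f : ℝ → ℝ} (hf : ∀ x, 0 ≤ f x) :
    (hA.cfc f).PosSemidef := by
  have h : (Matrix.diagonal (RCLike.ofReal ∘ f ∘ hA.eigenvalues) : Matrix ι ι ℂ).PosSemidef :=
    Matrix.posSemidef_diagonal_iff.mpr fun i => by
      simpa using Complex.zero_le_real.mpr (hf _)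
  have := h.mul_mul_conjTranspose_same (hA.eigenvectorUnitary : Matrix ι ι ℂ)
  rw [← Matrix.star_eq_conjTranspose] at this
  exact this

lemma cfc_id (hA : A.IsHermitian) : hA.cfc (fun x => x) = A := by
  conv_rhs => rw [hA.spectral_theorem]
  rfl

lemma cfc_isHermitian (hA : A.IsHermitian) (f : ℝ → ℝ) : (hA.cfc f).IsHermitian := by
  have h := (cfc_posSemidef hA (f := fun x => f x + |f x|)
    (fun x => by show 0 ≤ f x + |f x|; linarith [neg_abs_le (f x)])).1
  have h2 := (cfc_posSemidef hA (f := fun x => |f x|) (fun x => abs_nonneg _)).1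
  have he : hA.cfc f = hA.cfc (fun x => f x + |f x|) - hA.cfc (fun x => |f x|) := by
    rw [cfc_sub]; congr 1; funext x; ring
  rw [he]
  exact h.sub h2


lemma sqrt_eq_cfc_abs (hA : A.IsHermitian) :
    (Matrix.posSemidef_conjTranspose_mul_self A).sqrt = hA.cfc (fun x => |x|) := by
  have hP := Matrix.posSemidef_conjTranspose_mul_self A
  have h1 : (Matrix.posSemidef_conjTranspose_mul_self A).sqrt = hP.1.cfc Real.sqrt := by
    rw [Matrix.PosSemidef.sqrt, Matrix.IsHermitian.cfc, Unitary.conjStarAlgAut_apply]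
  rw [h1, ← hP.1.cfc_eq, ← hA.cfc_eq]
  have h2 : Aᴴ * A = cfc (fun x : ℝ => x * x) A := by
    rw [hA.cfc_eq, ← RTAux.cfc_mul, RTAux.cfc_id, hA.eq]
  rw [h2, ← _root_.cfc_comp Real.sqrt (fun x : ℝ => x * x) A]
  congr 1; funext x; simp [Function.comp, Real.sqrt_mul_self_eq_abs]

lemma traceNorm_herm (hA : A.IsHermitian) :
    traceNorm A = ∑ i, |hA.eigenvalues i| := by
  rw [traceNorm, sqrt_eq_cfc_abs hA, cfc_trace]
  simp

lemma traceNorm_posSemidef (hP : A.PosSemidef) : traceNorm A = A.trace.re := by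
  rw [traceNorm_herm hP.1]
  have ht := cfc_trace hP.1 (fun x => x)
  rw [cfc_id] at ht
  rw [ht]
  simp only [Complex.ofReal_re]
  exact Finset.sum_congr rfl fun i _ => abs_of_nonneg (hP.eigenvalues_nonneg i)

lemma traceNorm_zero : traceNorm (0 : Matrix ι ι ℂ) = 0 := by
  rw [traceNorm_posSemidef Matrix.PosSemidef.zero]
  simp

/-- Frobenius-type norm. -/
def fnorm (M : Matrix ι ι ℂ) : ℝ := Real.sqrt (∑ i, ∑ j, Complex.normSq (M i j))

lemma fnorm_nonneg (M : Matrix ι ι ℂ) : 0 ≤ fnorm M := Real.sqrt_nonneg _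

lemma fnorm_zero : fnorm (0 : Matrix ι ι ℂ) = 0 := by simp [fnorm]

lemma sum_normSq_eq (hA : A.IsHermitian) :
    ∑ i, ∑ j, Complex.normSq (A i j) = ∑ i, (hA.eigenvalues i) ^ 2 := by
  have h1 : (Aᴴ * A).trace = ((∑ i, ∑ j, Complex.normSq (A i j) : ℝ) : ℂ) := by
    rw [Matrix.trace]
    push_cast
    rw [Finset.sum_comm]
    refine Finset.sum_congr rfl fun i _ => ?_
    rw [Matrix.diag_apply, Matrix.mul_apply]
    refine Finset.sum_congr rfl fun j _ => ?_
    rw [Matrix.conjTranspose_apply, mul_comm]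
    simp [Complex.mul_conj]
  have h2 : Aᴴ * A = hA.cfc (fun x => x * x) := by
    rw [hA.eq]
    conv_lhs => rw [← cfc_id hA]
    rw [cfc_mul]
  rw [h2, cfc_trace] at h1
  have h3 := Complex.ofReal_injective h1
  rw [← h3]
  exact Finset.sum_congr rfl fun i _ => (sq (hA.eigenvalues i)).symm

lemma abs_eigenvalue_le_fnorm (hA : A.IsHermitian) (i : ι) :
    |hA.eigenvalues i| ≤ fnorm A := by
  rw [fnorm, sum_normSq_eq hA, ← Real.sqrt_sq_eq_abs]
  exact Real.sqrt_le_sqrt (Finset.single_le_sum (f := fun j => hA.eigenvalues j ^ 2) (fun j _ => sq_nonneg _) (Finset.mem_univ i))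

lemma traceNorm_le_card_fnorm (hA : A.IsHermitian) :
    traceNorm A ≤ (Fintype.card ι) * fnorm A := by
  rw [traceNorm_herm hA]
  calc ∑ i, |hA.eigenvalues i| ≤ ∑ _i : ι, fnorm A :=
        Finset.sum_le_sum fun i _ => abs_eigenvalue_le_fnorm hA i
    _ = (Fintype.card ι) * fnorm A := by rw [Finset.sum_const, Finset.card_univ, nsmul_eq_mul]


lemma key_re_trace_le (s mu : ι → ℝ) (hs : ∀ i, |s i| ≤ 1) (U V : Matrix ι ι ℂ)
    (hU : star U * U = 1) (hU' : U * star U = 1)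
    (hV : star V * V = 1) :
    |(((U * Matrix.diagonal (RCLike.ofReal ∘ s) * star U) *
        (V * Matrix.diagonal (RCLike.ofReal ∘ mu) * star V)).trace).re| ≤ ∑ j, |mu j| := by
  set W : Matrix ι ι ℂ := star U * V with hWdef
  have hWW : star W * W = 1 := by
    rw [hWdef, star_mul, star_star]
    calc star V * U * (star U * V) = star V * (U * star U) * V := by noncomm_ring
      _ = 1 := by rw [hU', mul_one, hV]
  have hcol : ∀ j, ∑ i, Complex.normSq (W i j) = 1 := by
    intro j
    have h := congrFun (congrFun hWW j) j
    have h1 : (star W * W) j j = ((∑ i, Complex.normSq (W i j) : ℝ) : ℂ) := by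
      rw [Matrix.mul_apply]
      push_cast
      refine Finset.sum_congr rfl fun i _ => ?_
      rw [Matrix.star_apply, mul_comm]
      simp [Complex.mul_conj]
    rw [h1] at h
    have h2 : ((1 : Matrix ι ι ℂ)) j j = 1 := Matrix.one_apply_eq j
    rw [h2] at h
    exact_mod_cast h
  have hT : ((U * Matrix.diagonal (RCLike.ofReal ∘ s) * star U) *
      (V * Matrix.diagonal (RCLike.ofReal ∘ mu) * star V)) =
      U * (Matrix.diagonal (RCLike.ofReal ∘ s) * W * Matrix.diagonal (RCLike.ofReal ∘ mu) * star W)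
        * star U := by
    rw [hWdef, star_mul, star_star]
    calc (U * Matrix.diagonal (RCLike.ofReal ∘ s) * star U) *
        (V * Matrix.diagonal (RCLike.ofReal ∘ mu) * star V)
        = (U * Matrix.diagonal (RCLike.ofReal ∘ s) * star U) *
          (V * Matrix.diagonal (RCLike.ofReal ∘ mu) * star V) * (U * star U) := by
            rw [hU', mul_one]
      _ = _ := by noncomm_ring
  rw [hT]
  have htr : ∀ M : Matrix ι ι ℂ, (U * M * star U).trace = M.trace := fun M => by
    rw [Matrix.trace_mul_cycle, hU, Matrix.one_mul]
  rw [htr]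
  have hM : (Matrix.diagonal (RCLike.ofReal ∘ s) * W * Matrix.diagonal (RCLike.ofReal ∘ mu)
      * star W).trace = ((∑ i, ∑ j, s i * mu j * Complex.normSq (W i j) : ℝ) : ℂ) := by
    rw [Matrix.trace]
    push_cast
    refine Finset.sum_congr rfl fun i _ => ?_
    rw [Matrix.diag_apply, Matrix.mul_apply]
    refine Finset.sum_congr rfl fun j _ => ?_
    rw [Matrix.mul_diagonal, Matrix.diagonal_mul, Matrix.star_apply]
    have hconj : W i j * star (W i j) = ((Complex.normSq (W i j) : ℝ) : ℂ) := by
      simp [Complex.mul_conj]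
    calc (RCLike.ofReal ∘ s) i * W i j * (RCLike.ofReal ∘ mu) j * star (W i j)
        = (RCLike.ofReal ∘ s) i * (RCLike.ofReal ∘ mu) j * (W i j * star (W i j)) := by ring
      _ = _ := by rw [hconj]; simp [Function.comp]
  rw [hM]
  rw [Complex.ofReal_re]
  calc |∑ i, ∑ j, s i * mu j * Complex.normSq (W i j)|
      ≤ ∑ i, ∑ j, |s i * mu j * Complex.normSq (W i j)| :=
        (Finset.abs_sum_le_sum_abs _ _).trans
          (Finset.sum_le_sum fun i _ => Finset.abs_sum_le_sum_abs _ _)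
    _ ≤ ∑ i, ∑ j, |mu j| * Complex.normSq (W i j) := by
        refine Finset.sum_le_sum fun i _ => Finset.sum_le_sum fun j _ => ?_
        rw [abs_mul, abs_mul, abs_of_nonneg (Complex.normSq_nonneg _)]
        have h1 : |s i| * |mu j| ≤ 1 * |mu j| :=
          mul_le_mul_of_nonneg_right (hs i) (abs_nonneg _)
        rw [one_mul] at h1
        exact mul_le_mul_of_nonneg_right h1 (Complex.normSq_nonneg _)
    _ = ∑ j, |mu j| * ∑ i, Complex.normSq (W i j) := by
        rw [Finset.sum_comm]
        exact Finset.sum_congr rfl fun j _ => (Finset.mul_sum _ _ _).symm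
    _ = ∑ j, |mu j| := by
        refine Finset.sum_congr rfl fun j _ => ?_
        rw [hcol j, mul_one]

lemma traceNorm_sub_le (hA : A.IsHermitian) (hB : B.IsHermitian) :
    traceNorm (A - B) ≤ traceNorm A + traceNorm B := by
  have hS : (A - B).IsHermitian := hA.sub hB
  set sgn : ℝ → ℝ := fun x => if x < 0 then -1 else 1 with hsgn
  have hsgn_abs : ∀ x, |sgn x| ≤ 1 := fun x => by
    rw [hsgn]; dsimp only; split <;> simp
  have hsgn_mul : ∀ x : ℝ, sgn x * x = |x| := fun x => by
    rw [hsgn]; dsimp only; split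
    · rw [abs_of_neg (by assumption)]; ring
    · rw [abs_of_nonneg (not_lt.mp (by assumption))]; ring
  have h1 : ((hS.cfc sgn * (A - B)).trace).re = traceNorm (A - B) := by
    nth_rewrite 2 [← cfc_id hS]
    rw [cfc_mul, cfc_trace, traceNorm_herm hS]
    simp only [Complex.ofReal_re]
    exact Finset.sum_congr rfl fun i _ => hsgn_mul _
  have hkey : ∀ (C : Matrix ι ι ℂ) (hC : C.IsHermitian),
      |((hS.cfc sgn * C).trace).re| ≤ traceNorm C := by
    intro C hC
    rw [traceNorm_herm hC]
    conv_lhs => rw [hC.spectral_theorem]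
    simp only [Matrix.IsHermitian.cfc]
    exact key_re_trace_le (sgn ∘ hS.eigenvalues) hC.eigenvalues (fun i => hsgn_abs _) _ _
      (star_mul_self_unitary hS) (mul_star_self_unitary hS) (star_mul_self_unitary hC)
  have h2 : hS.cfc sgn * (A - B) = hS.cfc sgn * A - hS.cfc sgn * B := mul_sub _ _ _
  calc traceNorm (A - B) = ((hS.cfc sgn * (A - B)).trace).re := h1.symm
    _ = ((hS.cfc sgn * A).trace).re - ((hS.cfc sgn * B).trace).re := by
        rw [h2, Matrix.trace_sub, Complex.sub_re]
    _ ≤ |((hS.cfc sgn * A).trace).re| + |((hS.cfc sgn * B).trace).re| := by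
        have hx := le_abs_self ((hS.cfc sgn * A).trace).re
        have hy := neg_abs_le ((hS.cfc sgn * B).trace).re
        linarith
    _ ≤ traceNorm A + traceNorm B := add_le_add (hkey A hA) (hkey B hB)

lemma cfc_jordan (hA : A.IsHermitian) :
    A = hA.cfc (fun x => max x 0) - hA.cfc (fun x => max (-x) 0) := by
  have hfun : (fun x : ℝ => max x 0 - max (-x) 0) = fun x : ℝ => x := by
    funext x
    rcases le_total x 0 with h | h
    · rw [max_eq_right h, max_eq_left (by linarith)]; ring
    · rw [max_eq_left h, max_eq_right (by linarith)]; ring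
  rw [cfc_sub, hfun, cfc_id]

lemma map_isHermitian (Φ : Matrix ι ι ℂ →ₗ[ℂ] Matrix ι ι ℂ)
    (hpos : ∀ M : Matrix ι ι ℂ, M.PosSemidef → (Φ M).PosSemidef)
    (hA : A.IsHermitian) : (Φ A).IsHermitian := by
  have hP := cfc_posSemidef hA (f := fun x => max x 0) (fun x => le_max_right _ _)
  have hQ := cfc_posSemidef hA (f := fun x => max (-x) 0) (fun x => le_max_right _ _)
  rw [show A = _ from cfc_jordan hA, map_sub]
  exact ((hpos _ hP).1).sub ((hpos _ hQ).1)

lemma traceNorm_map_le (Φ : Matrix ι ι ℂ →ₗ[ℂ] Matrix ι ι ℂ)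
    (hpos : ∀ M : Matrix ι ι ℂ, M.PosSemidef → (Φ M).PosSemidef)
    (htr : ∀ M : Matrix ι ι ℂ, (Φ M).trace = M.trace)
    (hA : A.IsHermitian) : traceNorm (Φ A) ≤ traceNorm A := by
  have hP := cfc_posSemidef hA (f := fun x => max x 0) (fun x => le_max_right _ _)
  have hQ := cfc_posSemidef hA (f := fun x => max (-x) 0) (fun x => le_max_right _ _)
  have hPQ : traceNorm (Φ A) ≤ traceNorm (hA.cfc (fun x => max x 0))
      + traceNorm (hA.cfc (fun x => max (-x) 0)) := by
    calc traceNorm (Φ A)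
        = traceNorm (Φ (hA.cfc (fun x => max x 0)) - Φ (hA.cfc (fun x => max (-x) 0))) := by
          conv_lhs => rw [cfc_jordan hA, map_sub]
      _ ≤ traceNorm (Φ (hA.cfc (fun x => max x 0)))
          + traceNorm (Φ (hA.cfc (fun x => max (-x) 0))) :=
          traceNorm_sub_le ((hpos _ hP).1) ((hpos _ hQ).1)
      _ = traceNorm (hA.cfc (fun x => max x 0)) + traceNorm (hA.cfc (fun x => max (-x) 0)) := by
          rw [traceNorm_posSemidef (hpos _ hP), traceNorm_posSemidef (hpos _ hQ),
            htr, htr, ← traceNorm_posSemidef hP, ← traceNorm_posSemidef hQ]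
  refine hPQ.trans (le_of_eq ?_)
  rw [traceNorm_posSemidef hP, traceNorm_posSemidef hQ, traceNorm_herm hA,
    cfc_trace, cfc_trace]
  simp only [Complex.ofReal_re]
  rw [← Finset.sum_add_distrib]
  refine Finset.sum_congr rfl fun i _ => ?_
  rcases le_total (hA.eigenvalues i) 0 with h | h
  · rw [max_eq_right h, max_eq_left (by linarith), abs_of_nonpos h]; ring
  · rw [max_eq_left h, max_eq_right (by linarith), abs_of_nonneg h]; ring

end RTAux

namespace RTAux2

open RTAux

instance matSecondCountable {d : ℕ} : SecondCountableTopology (Matrix (Fin d) (Fin d) ℂ) :=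
  inferInstanceAs (SecondCountableTopology (Fin d → Fin d → ℂ))

lemma sqrt_congr {ι : Type*} [Fintype ι] [DecidableEq ι] {A B : Matrix ι ι ℂ}
    (h : A = B) (hA : A.PosSemidef) (hB : B.PosSemidef) : hA.sqrt = hB.sqrt := by
  subst h; rfl

lemma traceNorm_neg {ι : Type*} [Fintype ι] [DecidableEq ι] (M : Matrix ι ι ℂ) :
    traceNorm (-M) = traceNorm M := by
  unfold traceNorm
  rw [sqrt_congr (show (-M)ᴴ * (-M) = Mᴴ * M by simp)
    (Matrix.posSemidef_conjTranspose_mul_self (-M)) (Matrix.posSemidef_conjTranspose_mul_self M)]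

variable {d : ℕ}

lemma channel_posSemidef (Λ : QChannel d) {M : Matrix (Fin d) (Fin d) ℂ}
    (hM : M.PosSemidef) : (Λ.toFun M).PosSemidef := by
  have hM' : (M.submatrix (Prod.fst : Fin d × Fin 1 → Fin d) Prod.fst).PosSemidef :=
    hM.submatrix _
  have h := Λ.cptp.1 1 _ hM'
  have he : Λ.toFun M = (amplify Λ.toFun 1 (M.submatrix Prod.fst Prod.fst)).submatrix
      (fun i : Fin d => ((i, 0) : Fin d × Fin 1)) (fun i => (i, 0)) := by
    ext i j
    simp only [Matrix.submatrix_apply, amplify, Matrix.of_apply]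
    congr 1
  rw [he]
  exact h.submatrix _

lemma channel_density (Λ : QChannel d) {ρ : Matrix (Fin d) (Fin d) ℂ}
    (hρ : IsDensityMatrix ρ) : IsDensityMatrix (Λ.toFun ρ) :=
  ⟨channel_posSemidef Λ hρ.1, by rw [Λ.cptp.2]; exact hρ.2⟩

lemma channel_isHermitian (Λ : QChannel d) {M : Matrix (Fin d) (Fin d) ℂ}
    (hM : M.IsHermitian) : (Λ.toFun M).IsHermitian :=
  map_isHermitian Λ.toFun (fun _ h => channel_posSemidef Λ h) hM

lemma channel_traceNorm_le (Λ : QChannel d) {M : Matrix (Fin d) (Fin d) ℂ}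
    (hM : M.IsHermitian) : traceNorm (Λ.toFun M) ≤ traceNorm M :=
  traceNorm_map_le Λ.toFun (fun _ h => channel_posSemidef Λ h) Λ.cptp.2 hM

variable {RT : ResourceTheory d}

lemma conv_refl (ρ : Matrix (Fin d) (Fin d) ℂ) : Converts RT ρ ρ := by
  intro ε hε
  obtain ⟨Λ, hΛ, hid⟩ := RT.id_mem
  exact ⟨Λ, hΛ, by rw [hid, sub_self, traceNorm_zero]; exact hε⟩

lemma conv_channel {Λ : QChannel d} (hΛ : Λ ∈ RT.O) (ρ : Matrix (Fin d) (Fin d) ℂ) :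
    Converts RT ρ (Λ.toFun ρ) := by
  intro ε hε
  exact ⟨Λ, hΛ, by rw [sub_self, traceNorm_zero]; exact hε⟩

lemma conv_prep {σ : Matrix (Fin d) (Fin d) ℂ} (hσ : σ ∈ RT.F)
    {ρ : Matrix (Fin d) (Fin d) ℂ} (hρ : IsDensityMatrix ρ) : Converts RT ρ σ := by
  intro ε hε
  obtain ⟨Λ, hΛ, hprep⟩ := RT.prep_mem σ hσ
  exact ⟨Λ, hΛ, by rw [hprep, hρ.2, one_smul, sub_self, traceNorm_zero]; exact hε⟩

lemma conv_trans {ρ σ τ : Matrix (Fin d) (Fin d) ℂ} (hρ : IsDensityMatrix ρ)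
    (hσ : IsDensityMatrix σ) (hτ : IsDensityMatrix τ)
    (h1 : Converts RT ρ σ) (h2 : Converts RT σ τ) : Converts RT ρ τ := by
  intro ε hε
  obtain ⟨Λ₂, hΛ₂, h₂⟩ := h2 (ε / 2) (by linarith)
  obtain ⟨Λ₁, hΛ₁, h₁⟩ := h1 (ε / 2) (by linarith)
  obtain ⟨Λ, hΛ, hcomp⟩ := RT.comp_mem Λ₁ hΛ₁ Λ₂ hΛ₂
  refine ⟨Λ, hΛ, ?_⟩
  rw [hcomp]
  have hρ₁ := channel_density Λ₁ hρ
  have hρ₂ := channel_density Λ₂ hρ₁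
  have hσ₂ := channel_density Λ₂ hσ
  have hdecomp : Λ₂.toFun (Λ₁.toFun ρ) - τ =
      (Λ₂.toFun (Λ₁.toFun ρ) - Λ₂.toFun σ) - -(Λ₂.toFun σ - τ) := by abel
  have hstep : traceNorm (Λ₂.toFun (Λ₁.toFun ρ) - τ) ≤
      traceNorm (Λ₂.toFun (Λ₁.toFun ρ) - Λ₂.toFun σ) + traceNorm (-(Λ₂.toFun σ - τ)) := by
    rw [hdecomp]
    exact traceNorm_sub_le (hρ₂.1.1.sub hσ₂.1.1) ((hσ₂.1.1.sub hτ.1.1).neg)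
  rw [traceNorm_neg] at hstep
  have hcontr : traceNorm (Λ₂.toFun (Λ₁.toFun ρ) - Λ₂.toFun σ) ≤
      traceNorm (Λ₁.toFun ρ - σ) := by
    rw [← map_sub]
    exact channel_traceNorm_le Λ₂ (hρ₁.1.1.sub hσ.1.1)
  linarith

lemma notconv_isOpen (RT : ResourceTheory d) {y : Matrix (Fin d) (Fin d) ℂ}
    (hy : IsDensityMatrix y) :
    IsOpen {z : ↥{ρ : Matrix (Fin d) (Fin d) ℂ | IsDensityMatrix ρ} |
      ¬ Converts RT ↑z y} := by
  rw [isOpen_iff_mem_nhds]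
  intro z hz
  simp only [Set.mem_setOf_eq, Converts] at hz
  push_neg at hz
  obtain ⟨ε, hε, hall⟩ := hz
  set c := ε / (2 * ((d : ℝ) + 1)) with hc
  have hcpos : 0 < c := by positivity
  set q : ↥{ρ : Matrix (Fin d) (Fin d) ℂ | IsDensityMatrix ρ} → ℝ :=
    fun w => fnorm ((w : Matrix (Fin d) (Fin d) ℂ) - (z : Matrix (Fin d) (Fin d) ℂ)) with hq
  have hcont : Continuous q := by
    simp only [hq, fnorm]
    refine Real.continuous_sqrt.comp ?_
    refine continuous_finset_sum _ fun i _ => continuous_finset_sum _ fun j _ => ?_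
    have hentry : Continuous fun w : ↥{ρ : Matrix (Fin d) (Fin d) ℂ | IsDensityMatrix ρ} =>
        ((w : Matrix (Fin d) (Fin d) ℂ) - (z : Matrix (Fin d) (Fin d) ℂ)) i j := by
      simp only [Matrix.sub_apply]
      have happly : Continuous fun M : Fin d → Fin d → ℂ => M i j := by fun_prop
      have hval : Continuous (Subtype.val :
          ↥{ρ : Matrix (Fin d) (Fin d) ℂ | IsDensityMatrix ρ} → Matrix (Fin d) (Fin d) ℂ) :=
        continuous_subtype_val
      exact (happly.comp hval).sub continuous_const
    exact Complex.continuous_normSq.comp hentry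
  refine mem_nhds_iff.mpr ⟨q ⁻¹' Set.Iio c, ?_, hcont.isOpen_preimage _ isOpen_Iio, ?_⟩
  · intro w hw
    simp only [Set.mem_preimage, Set.mem_Iio, hq] at hw
    simp only [Set.mem_setOf_eq]
    intro hC
    obtain ⟨Λ, hΛ, hnear⟩ := hC (ε / 2) (by linarith)
    have hwd : IsDensityMatrix (w : Matrix (Fin d) (Fin d) ℂ) := w.2
    have hzd : IsDensityMatrix (z : Matrix (Fin d) (Fin d) ℂ) := z.2
    have hwz : ((w : Matrix (Fin d) (Fin d) ℂ) - (z : Matrix (Fin d) (Fin d) ℂ)).IsHermitian :=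
      hwd.1.1.sub hzd.1.1
    have hdecomp : Λ.toFun (z : Matrix (Fin d) (Fin d) ℂ) - y =
        (Λ.toFun (w : Matrix (Fin d) (Fin d) ℂ) - y) -
          (Λ.toFun ((w : Matrix (Fin d) (Fin d) ℂ) - (z : Matrix (Fin d) (Fin d) ℂ))) := by
      rw [map_sub]; abel
    have hstep : traceNorm (Λ.toFun (z : Matrix (Fin d) (Fin d) ℂ) - y) ≤
        traceNorm (Λ.toFun (w : Matrix (Fin d) (Fin d) ℂ) - y) +
          traceNorm (Λ.toFun ((w : Matrix (Fin d) (Fin d) ℂ) - (z : Matrix (Fin d) (Fin d) ℂ))) := by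
      rw [hdecomp]
      exact traceNorm_sub_le ((channel_density Λ hwd).1.1.sub hy.1.1)
        (channel_isHermitian Λ hwz)
    have h2 : traceNorm (Λ.toFun ((w : Matrix (Fin d) (Fin d) ℂ) - (z : Matrix (Fin d) (Fin d) ℂ)))
        ≤ traceNorm ((w : Matrix (Fin d) (Fin d) ℂ) - (z : Matrix (Fin d) (Fin d) ℂ)) :=
      channel_traceNorm_le Λ hwz
    have h3 : traceNorm ((w : Matrix (Fin d) (Fin d) ℂ) - (z : Matrix (Fin d) (Fin d) ℂ)) ≤
        (d : ℝ) * fnorm ((w : Matrix (Fin d) (Fin d) ℂ) - (z : Matrix (Fin d) (Fin d) ℂ)) := by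
      have h := traceNorm_le_card_fnorm hwz
      rwa [Fintype.card_fin] at h
    have h4 := hall Λ hΛ
    have hd0 : (0 : ℝ) ≤ (d : ℝ) := Nat.cast_nonneg d
    have h5 : (d : ℝ) * fnorm ((w : Matrix (Fin d) (Fin d) ℂ) - (z : Matrix (Fin d) (Fin d) ℂ))
        ≤ (d : ℝ) * c := mul_le_mul_of_nonneg_left hw.le hd0
    have h6 : (d : ℝ) * c ≤ ε / 2 := by
      rw [hc, mul_div_assoc']
      rw [div_le_div_iff₀ (by positivity) (by norm_num)]
      nlinarith [hε.le]
    linarith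
  · simp only [Set.mem_preimage, Set.mem_Iio, hq, sub_self, fnorm_zero]
    exact hcpos


end RTAux2

/-- A resource theory has a single complete resource monotone if and
only if it is totally ordered: there is a monotone `R` with `ρ → σ ↔ R(ρ) ≥ R(σ)`
exactly when every pair of states is convertible in at least one direction. -/
theorem single_complete_monotone_iff_totally_ordered {d : ℕ} (RT : ResourceTheory d) :
    (∃ R : Matrix (Fin d) (Fin d) ℂ → ℝ, IsMonotone RT R ∧
      ∀ ρ σ : Matrix (Fin d) (Fin d) ℂ, IsDensityMatrix ρ → IsDensityMatrix σ →
        (Converts RT ρ σ ↔ R σ ≤ R ρ)) ↔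
    (∀ ρ σ : Matrix (Fin d) (Fin d) ℂ, IsDensityMatrix ρ → IsDensityMatrix σ →
      Converts RT ρ σ ∨ Converts RT σ ρ) := by
  classical
  constructor
  · rintro ⟨R, _, hcomp⟩ ρ σ hρ hσ
    rcases le_total (R σ) (R ρ) with h | h
    · exact Or.inl ((hcomp ρ σ hρ hσ).mpr h)
    · exact Or.inr ((hcomp σ ρ hσ hρ).mpr h)
  · intro htot
    set S : Set (Matrix (Fin d) (Fin d) ℂ) := {ρ | IsDensityMatrix ρ} with hSdef
    have hmem : ∀ z : ↥S, IsDensityMatrix (z : Matrix (Fin d) (Fin d) ℂ) := fun z => z.2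
    have hL_mono : ∀ x y : ↥S, Converts RT ↑y ↑x →
        {z : ↥S | ¬ Converts RT ↑z ↑x} ⊆ {z : ↥S | ¬ Converts RT ↑z ↑y} := by
      intro x y hxy z hzx hzy
      exact hzx (RTAux2.conv_trans (hmem z) (hmem y) (hmem x) hzy hxy)
    obtain ⟨b, hbc, -, hbasis⟩ := TopologicalSpace.exists_countable_basis ↥S
    obtain ⟨f, hf⟩ := (hbc.insert ∅).exists_eq_range (Set.insert_nonempty _ _)
    set g : ↥S → ℕ → ℝ := fun x n =>
      if f n ⊆ {z : ↥S | ¬ Converts RT ↑z ↑x} then (1 / 2) ^ (n + 1) else 0 with hg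
    have hg_nonneg : ∀ x n, 0 ≤ g x n := by
      intro x n
      simp only [hg]
      split
      · positivity
      · exact le_refl 0
    have hgle : ∀ x n, g x n ≤ (1 / 2) ^ (n + 1) := by
      intro x n
      simp only [hg]
      split
      · exact le_refl _
      · positivity
    have hsum0 : Summable fun n : ℕ => ((1 : ℝ) / 2) ^ (n + 1) := by
      have h := (summable_geometric_of_lt_one (r := (1 : ℝ) / 2) (by norm_num)
        (by norm_num)).mul_right ((1 : ℝ) / 2)
      refine h.congr fun n => ?_
      rw [pow_succ]
    have hsummable : ∀ x, Summable (g x) := fun x =>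
      Summable.of_nonneg_of_le (hg_nonneg x) (hgle x) hsum0
    set u : ↥S → ℝ := fun x => ∑' n, g x n with hu
    have hg_mono : ∀ x y : ↥S, Converts RT ↑y ↑x → ∀ n, g x n ≤ g y n := by
      intro x y hxy n
      simp only [hg]
      by_cases h : f n ⊆ {z : ↥S | ¬ Converts RT ↑z ↑x}
      · rw [if_pos h, if_pos (show f n ⊆ {z : ↥S | ¬ Converts RT ↑z ↑y} from
          fun z hz => hL_mono x y hxy (h hz))]
      · rw [if_neg h]
        split
        · positivity
        · exact le_refl 0
    have hu_mono : ∀ x y : ↥S, Converts RT ↑y ↑x → u x ≤ u y := fun x y hxy =>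
      Summable.tsum_le_tsum (hg_mono x y hxy) (hsummable x) (hsummable y)
    have hu_strict : ∀ x y : ↥S, Converts RT ↑y ↑x → ¬ Converts RT ↑x ↑y → u x < u y := by
      intro x y hyx hxy
      have hxLy : x ∈ {z : ↥S | ¬ Converts RT ↑z ↑y} := hxy
      obtain ⟨v, hvb, hxv, hvL⟩ := hbasis.exists_subset_of_mem_open hxLy
        (RTAux2.notconv_isOpen RT (hmem y))
      have hv' : v ∈ insert ∅ b := Set.mem_insert_of_mem _ hvb
      rw [hf] at hv'
      obtain ⟨n, hn⟩ := hv'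
      refine Summable.tsum_lt_tsum (hg_mono x y hyx) (i := n) ?_ (hsummable x) (hsummable y)
      have hgy : g y n = (1 / 2) ^ (n + 1) := by
        simp only [hg]
        rw [if_pos (show f n ⊆ {z : ↥S | ¬ Converts RT ↑z ↑y} from hn ▸ hvL)]
      have hgx : g x n = 0 := by
        simp only [hg]
        rw [if_neg]
        intro hsub
        have hxLx : x ∈ {z : ↥S | ¬ Converts RT ↑z ↑x} := hsub (hn ▸ hxv)
        exact hxLx (RTAux2.conv_refl _)
      rw [hgx, hgy]
      positivity
    have hu_nonneg : ∀ x, 0 ≤ u x := fun x => tsum_nonneg (hg_nonneg x)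
    have hbdd : BddBelow (Set.range u) := ⟨0, by rintro _ ⟨x, rfl⟩; exact hu_nonneg x⟩
    refine ⟨fun ρ => if h : IsDensityMatrix ρ then u ⟨ρ, h⟩ - sInf (Set.range u) else 0,
      ⟨?_, ?_, ?_⟩, ?_⟩
    · intro ρ hρ
      dsimp only
      rw [dif_pos hρ]
      have h := csInf_le hbdd (Set.mem_range_self (⟨ρ, hρ⟩ : ↥S))
      linarith
    · intro ρ hρ Λ hΛ
      have hΛρ := RTAux2.channel_density Λ hρ
      dsimp only
      rw [dif_pos hΛρ, dif_pos hρ]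
      have h := hu_mono ⟨Λ.toFun ρ, hΛρ⟩ ⟨ρ, hρ⟩ (RTAux2.conv_channel hΛ ρ)
      linarith
    · intro σ hσ
      have hd := RT.F_density σ hσ
      dsimp only
      rw [dif_pos hd]
      have h1 : sInf (Set.range u) ≤ u ⟨σ, hd⟩ := csInf_le hbdd (Set.mem_range_self _)
      have h2 : u ⟨σ, hd⟩ ≤ sInf (Set.range u) := by
        refine le_csInf ⟨u ⟨σ, hd⟩, Set.mem_range_self _⟩ ?_
        rintro r ⟨x, rfl⟩
        exact hu_mono ⟨σ, hd⟩ x (RTAux2.conv_prep hσ (hmem x))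
      linarith
    · intro ρ σ hρ hσ
      dsimp only
      rw [dif_pos hσ, dif_pos hρ]
      constructor
      · intro h
        have h2 := hu_mono ⟨σ, hσ⟩ ⟨ρ, hρ⟩ h
        linarith
      · intro h
        by_contra hcon
        have h2 : Converts RT σ ρ := (htot ρ σ hρ hσ).resolve_left hcon
        have h3 := hu_strict ⟨ρ, hρ⟩ ⟨σ, hσ⟩ h2 hcon
        linarith
end
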